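/- Let A, D, Π be real n×n matrices with D, Π symmetric, Π positive definite and ΠD + DᵀΠ positive semidefinite; let B be n×m, C be m×n; let Q, R be real symmetric m×m matrices and L a real m×m matrix; let μ ≥ 0 and ε > 0. Suppose the symmetric block matrix with top-left block (A − D)ᵀΠ + Π(A − D) + 2μΠ − CᵀQC + εIₙ, top-right block ΠB − CᵀL, bottom-left block BᵀΠ − LᵀC, and bottom-right block −R is negative semidefinite. Then for every twice continuously differentiable 2π-periodic function v : ℝ → ℝⁿ with v′ also 2π-periodic and ∫₀^{2π} v(θ) dθ = 0, and every continuous 2π-periodic u : ℝ → ℝᵐ, one has ∫₀^{2π} [ 2 v(θ)ᵀ Π (D v″(θ) + A v(θ) + B u(θ)) + 2μ v(θ)ᵀΠv(θ) + ε|v(θ)|² ] dθ ≤ ∫₀^{2π} σ(C v(θ), u(θ)) dθ, where σ(y, w) := yᵀQy + 2yᵀLw + wᵀRw. -/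

import Mathlib

open Matrix


open Matrix MeasureTheory intervalIntegral AddCircle Complex

private lemma my_two_pi_pos : (0:ℝ) < 2 * Real.pi := by positivity

private lemma hasSum_sq_coeff (g : ℝ → ℝ) (hg : Continuous g)
    (hper : ∀ x, g (x + 2 * Real.pi) = g x) :
    HasSum (fun n : ℤ => ‖fourierCoeffOn my_two_pi_pos (fun x => (g x : ℂ)) n‖ ^ 2)
      ((1 / (2 * Real.pi)) * ∫ x in (0:ℝ)..(2 * Real.pi), g x ^ 2) := by
  haveI : Fact (0 < 2 * Real.pi) := ⟨my_two_pi_pos⟩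
  set gc : ℝ → ℂ := fun x => (g x : ℂ) with hgc
  have hperc : Function.Periodic gc (2 * Real.pi) := fun x => by simp [hgc, hper x]
  set G : AddCircle (2 * Real.pi) → ℂ := hperc.lift with hG
  have hGcoe : ∀ x : ℝ, G (x : AddCircle (2 * Real.pi)) = gc x := fun x => rfl
  have hGcont : Continuous G := by
    rw [hG]
    refine (QuotientAddGroup.isOpenQuotientMap_mk).isQuotientMap.continuous_iff.mpr ?_
    exact Complex.continuous_ofReal.comp hg
  set Gc : C(AddCircle (2 * Real.pi), ℂ) := ⟨G, hGcont⟩ with hGc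
  set gL := ContinuousMap.toLp (E := ℂ) 2 haarAddCircle ℂ Gc with hgL
  have hcoeff : ∀ n : ℤ, fourierCoeff (gL : AddCircle (2 * Real.pi) → ℂ) n
      = fourierCoeffOn my_two_pi_pos gc n := by
    intro n
    rw [show ((gL : AddCircle (2 * Real.pi) → ℂ)) = ((ContinuousMap.toLp (E := ℂ) 2 haarAddCircle ℂ Gc : Lp ℂ 2 haarAddCircle) : AddCircle (2 * Real.pi) → ℂ) from rfl]
    rw [fourierCoeff_toLp]
    rw [fourierCoeff_eq_intervalIntegral _ n 0, fourierCoeffOn_eq_integral]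
    have hGc' : ∀ x : ℝ, Gc ((x : ℝ) : AddCircle (2 * Real.pi)) = gc x := fun x => hGcoe x
    simp_rw [fourier_coe_apply, hGc']
    norm_num
  -- Parseval
  have hpars := tsum_sq_fourierCoeff gL
  have hint : (∫ t : AddCircle (2 * Real.pi), ‖(gL : AddCircle (2 * Real.pi) → ℂ) t‖ ^ 2 ∂haarAddCircle)
      = (1 / (2 * Real.pi)) * ∫ x in (0:ℝ)..(2 * Real.pi), g x ^ 2 := by
    have hae : (gL : AddCircle (2 * Real.pi) → ℂ) =ᵐ[haarAddCircle] G :=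
      ContinuousMap.coeFn_toLp (p := 2) (μ := haarAddCircle) (𝕜 := ℂ) Gc
    rw [integral_congr_ae (hae.mono fun t ht => by rw [ht])]
    have h1 : (∫ x in (0:ℝ)..(0 + 2 * Real.pi), ‖G (x : AddCircle (2 * Real.pi))‖ ^ 2)
        = ∫ t : AddCircle (2 * Real.pi), ‖G t‖ ^ 2 ∂volume :=
      AddCircle.intervalIntegral_preimage (2 * Real.pi) 0 (fun t => ‖G t‖ ^ 2)
    rw [volume_eq_smul_haarAddCircle, MeasureTheory.integral_smul_measure] at h1
    rw [ENNReal.toReal_ofReal my_two_pi_pos.le] at h1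
    have h2 : (∫ x in (0:ℝ)..(0 + 2 * Real.pi), ‖G (x : AddCircle (2 * Real.pi))‖ ^ 2)
        = ∫ x in (0:ℝ)..(2 * Real.pi), g x ^ 2 := by
      rw [zero_add]
      apply intervalIntegral.integral_congr
      intro x hx
      show ‖G ((x : ℝ) : AddCircle (2 * Real.pi))‖ ^ 2 = g x ^ 2
      rw [hGcoe]
      simp [hgc, Complex.norm_real, sq_abs]
    rw [h2] at h1
    rw [h1, smul_eq_mul]
    field_simp
  rw [hint] at hpars
  have hsumm : Summable (fun n : ℤ => ‖fourierCoeff (gL : AddCircle (2 * Real.pi) → ℂ) n‖ ^ 2) := by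
    have hm := lp.memℓp (fourierBasis.repr gL)
    have hs := hm.summable (by norm_num : 0 < (2 : ENNReal).toReal)
    refine hs.congr fun n => ?_
    rw [fourierBasis_repr]
    norm_num
  have : HasSum (fun n : ℤ => ‖fourierCoeff (gL : AddCircle (2 * Real.pi) → ℂ) n‖ ^ 2)
      ((1 / (2 * Real.pi)) * ∫ x in (0:ℝ)..(2 * Real.pi), g x ^ 2) := by
    rw [← hpars]
    exact hsumm.hasSum
  refine this.congr_fun fun n => ?_
  rw [hcoeff n]

private lemma wirtinger_aux (f f' : ℝ → ℝ) (hd : ∀ x, HasDerivAt f (f' x) x)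
    (hc' : Continuous f')
    (hper : ∀ x, f (x + 2 * Real.pi) = f x)
    (hper' : ∀ x, f' (x + 2 * Real.pi) = f' x)
    (hmean : ∫ x in (0:ℝ)..(2 * Real.pi), f x = 0) :
    ∫ x in (0:ℝ)..(2 * Real.pi), f x ^ 2 ≤ ∫ x in (0:ℝ)..(2 * Real.pi), f' x ^ 2 := by
  have hcf : Continuous f := by
    rw [continuous_iff_continuousAt]; exact fun x => (hd x).continuousAt
  set c := fun n : ℤ => fourierCoeffOn my_two_pi_pos (fun x => (f x : ℂ)) n with hc
  set d := fun n : ℤ => fourierCoeffOn my_two_pi_pos (fun x => (f' x : ℂ)) n with hdd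
  have hSf := hasSum_sq_coeff f hcf hper
  have hSf' := hasSum_sq_coeff f' hc' hper'
  -- c 0 = 0
  have hc0 : c 0 = 0 := by
    rw [hc]
    simp only [fourierCoeffOn_eq_integral, neg_zero]
    simp only [fourier_zero, one_smul]
    rw [intervalIntegral.integral_ofReal, hmean]
    simp
  -- derivative relation
  have hrel : ∀ n : ℤ, n ≠ 0 → d n = Complex.I * n * c n := by
    intro n hn
    have hF : ∀ x ∈ Set.uIcc (0:ℝ) (2 * Real.pi),
        HasDerivAt (fun x : ℝ => (f x : ℂ)) ((f' x : ℂ)) x :=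
      fun x _ => (hd x).ofReal_comp
    have hint : IntervalIntegrable (fun x : ℝ => (f' x : ℂ)) MeasureTheory.volume 0 (2 * Real.pi) :=
      (Complex.continuous_ofReal.comp hc').intervalIntegrable _ _
    have h := fourierCoeffOn_of_hasDerivAt my_two_pi_pos hn hF hint
    have hf20 : ((f (2 * Real.pi) : ℂ) - (f 0 : ℂ)) = 0 := by
      have := hper 0; rw [zero_add] at this; rw [this, sub_self]
    rw [hf20, mul_zero, zero_sub] at h
    have hπ : (Real.pi : ℂ) ≠ 0 := by
      simpa using Complex.ofReal_ne_zero.mpr Real.pi_ne_zero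
    have hnne : (n : ℂ) ≠ 0 := Int.cast_ne_zero.mpr hn
    show fourierCoeffOn my_two_pi_pos (fun x => (f' x : ℂ)) n
      = Complex.I * n * fourierCoeffOn my_two_pi_pos (fun x => (f x : ℂ)) n
    rw [h]
    have hI : Complex.I ≠ 0 := Complex.I_ne_zero
    field_simp
    push_cast
    ring
  -- termwise inequality
  have hterm : ∀ n : ℤ, ‖c n‖ ^ 2 ≤ ‖d n‖ ^ 2 := by
    intro n
    rcases eq_or_ne n 0 with rfl | hn
    · rw [hc0]; simp [sq_nonneg]
    · rw [hrel n hn]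
      have h1 : ‖Complex.I * (n : ℂ) * c n‖ = |(n : ℝ)| * ‖c n‖ := by
        rw [norm_mul, norm_mul, Complex.norm_I, one_mul]
        norm_num
      rw [h1]
      have h2 : (1:ℝ) ≤ |(n:ℝ)| := by
        rw [← Int.cast_abs]
        exact_mod_cast Int.one_le_abs hn
      have h3 : ‖c n‖ ≤ |(n:ℝ)| * ‖c n‖ := le_mul_of_one_le_left (norm_nonneg _) h2
      exact pow_le_pow_left₀ (norm_nonneg _) h3 2
  have hle := Summable.tsum_le_tsum hterm hSf.summable hSf'.summable
  rw [hSf.tsum_eq, hSf'.tsum_eq] at hle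
  have h2pi : 0 < 2 * Real.pi := my_two_pi_pos
  calc ∫ x in (0:ℝ)..(2 * Real.pi), f x ^ 2
      = (2 * Real.pi) * ((1 / (2 * Real.pi)) * ∫ x in (0:ℝ)..(2 * Real.pi), f x ^ 2) := by
        field_simp
    _ ≤ (2 * Real.pi) * ((1 / (2 * Real.pi)) * ∫ x in (0:ℝ)..(2 * Real.pi), f' x ^ 2) := by
        apply mul_le_mul_of_nonneg_left hle h2pi.le
    _ = ∫ x in (0:ℝ)..(2 * Real.pi), f' x ^ 2 := by field_simp

private lemma dot_trans {k l : ℕ} (M : Matrix (Fin k) (Fin l) ℝ)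
    (a : Fin l → ℝ) (b : Fin k → ℝ) : a ⬝ᵥ (Mᵀ *ᵥ b) = (M *ᵥ a) ⬝ᵥ b := by
  rw [Matrix.dotProduct_mulVec, Matrix.vecMul_transpose]

private lemma dot_symm {k : ℕ} (M : Matrix (Fin k) (Fin k) ℝ) (hM : M.IsSymm)
    (a b : Fin k → ℝ) : a ⬝ᵥ (M *ᵥ b) = b ⬝ᵥ (M *ᵥ a) := by
  rw [Matrix.dotProduct_mulVec, ← Matrix.mulVec_transpose, hM.eq]
  exact dotProduct_comm _ _

private lemma lmi_pointwise {n m : ℕ}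
    (A D Pm : Matrix (Fin n) (Fin n) ℝ)
    (B : Matrix (Fin n) (Fin m) ℝ) (C : Matrix (Fin m) (Fin n) ℝ)
    (Q R L : Matrix (Fin m) (Fin m) ℝ)
    (hPm : Pm.IsSymm) (μ ε : ℝ)
    (x : Fin n → ℝ) (y : Fin m → ℝ)
    (H : Sum.elim x y ⬝ᵥ (Matrix.fromBlocks
        ((A - D)ᵀ * Pm + Pm * (A - D) + (2 * μ) • Pm - Cᵀ * Q * C
          + ε • (1 : Matrix (Fin n) (Fin n) ℝ))
        (Pm * B - Cᵀ * L) (Bᵀ * Pm - Lᵀ * C) (-R) *ᵥ Sum.elim x y) ≤ 0) :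
    2 * (x ⬝ᵥ (Pm *ᵥ (A *ᵥ x + B *ᵥ y))) + 2 * μ * (x ⬝ᵥ (Pm *ᵥ x)) + ε * (x ⬝ᵥ x)
      ≤ ((C *ᵥ x) ⬝ᵥ (Q *ᵥ (C *ᵥ x)) + 2 * ((C *ᵥ x) ⬝ᵥ (L *ᵥ y)) + y ⬝ᵥ (R *ᵥ y))
        + x ⬝ᵥ ((Pm * D + Dᵀ * Pm) *ᵥ x) := by
  rw [Matrix.fromBlocks_mulVec, sumElim_dotProduct_sumElim] at H
  simp only [Matrix.add_mulVec, Matrix.sub_mulVec, Matrix.smul_mulVec,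
    Matrix.one_mulVec, Matrix.neg_mulVec, ← Matrix.mulVec_mulVec,
    dotProduct_add, dotProduct_sub, dotProduct_smul,
    dotProduct_neg, smul_eq_mul, dot_trans, Sum.elim_comp_inl, Sum.elim_comp_inr] at H
  have s1 : ((A *ᵥ x - D *ᵥ x)) ⬝ᵥ (Pm *ᵥ x) = x ⬝ᵥ (Pm *ᵥ (A *ᵥ x - D *ᵥ x)) :=
    dot_symm Pm hPm _ _
  have s2 : (B *ᵥ y) ⬝ᵥ (Pm *ᵥ x) = x ⬝ᵥ (Pm *ᵥ (B *ᵥ y)) := dot_symm Pm hPm _ _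
  have s3 : (L *ᵥ y) ⬝ᵥ (C *ᵥ x) = (C *ᵥ x) ⬝ᵥ (L *ᵥ y) := dotProduct_comm _ _
  rw [s1, s2, s3] at H
  simp only [Matrix.mulVec_add, Matrix.mulVec_sub, Matrix.add_mulVec,
    ← Matrix.mulVec_mulVec, dotProduct_add,
    dotProduct_sub, dot_trans] at H ⊢
  have s4 : (D *ᵥ x) ⬝ᵥ (Pm *ᵥ x) = x ⬝ᵥ (Pm *ᵥ (D *ᵥ x)) := dot_symm Pm hPm _ _
  rw [s4]
  linarith [H]



/-- the LMIs (11)-(12) of the paper (with `λ₂ = 1`) imply the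
uniform differential dissipation inequality for the linear diffusion-reaction
operator `v ↦ Dv'' + Av + Bu` on zero-mean `2π`-periodic functions, with
supply rate `σ(y, w) = yᵀQy + 2yᵀLw + wᵀRw`. -/
theorem lmi_implies_differential_dissipation
    (n m : ℕ)
    (A D Pm : Matrix (Fin n) (Fin n) ℝ)
    (B : Matrix (Fin n) (Fin m) ℝ) (C : Matrix (Fin m) (Fin n) ℝ)
    (Q R L : Matrix (Fin m) (Fin m) ℝ)
    (hD : D.IsSymm) (hPm : Pm.IsSymm)
    (hPmpd : ∀ x : Fin n → ℝ, x ≠ 0 → 0 < x ⬝ᵥ (Pm *ᵥ x))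
    (hPD : ∀ x : Fin n → ℝ, 0 ≤ x ⬝ᵥ ((Pm * D + Dᵀ * Pm) *ᵥ x))
    (hQ : Q.IsSymm) (hR : R.IsSymm)
    (μ ε : ℝ) (hμ : 0 ≤ μ) (hε : 0 < ε)
    (hLMI : ∀ z : Fin n ⊕ Fin m → ℝ,
      z ⬝ᵥ (Matrix.fromBlocks
        ((A - D)ᵀ * Pm + Pm * (A - D) + (2 * μ) • Pm - Cᵀ * Q * C
          + ε • (1 : Matrix (Fin n) (Fin n) ℝ))
        (Pm * B - Cᵀ * L) (Bᵀ * Pm - Lᵀ * C) (-R) *ᵥ z) ≤ 0)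
    (v : ℝ → Fin n → ℝ) (hv : ContDiff ℝ 2 v)
    (hvper : ∀ θ : ℝ, v (θ + 2 * Real.pi) = v θ)
    (hv'per : ∀ θ : ℝ, deriv v (θ + 2 * Real.pi) = deriv v θ)
    (hmean : ∫ θ in (0:ℝ)..(2 * Real.pi), v θ = 0)
    (u : ℝ → Fin m → ℝ) (hu : Continuous u)
    (huper : ∀ θ : ℝ, u (θ + 2 * Real.pi) = u θ) :
    (∫ θ in (0:ℝ)..(2 * Real.pi),
      (2 * (v θ ⬝ᵥ (Pm *ᵥ (D *ᵥ deriv (deriv v) θ + A *ᵥ v θ + B *ᵥ u θ)))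
        + 2 * μ * (v θ ⬝ᵥ (Pm *ᵥ v θ)) + ε * (v θ ⬝ᵥ v θ))) ≤
    ∫ θ in (0:ℝ)..(2 * Real.pi),
      ((C *ᵥ v θ) ⬝ᵥ (Q *ᵥ (C *ᵥ v θ)) + 2 * ((C *ᵥ v θ) ⬝ᵥ (L *ᵥ u θ))
        + u θ ⬝ᵥ (R *ᵥ u θ)) := by
  -- basic smoothness facts
  have hv2 : ContDiff ℝ (1 + 1 : WithTop ℕ∞) v := by
    rw [one_add_one_eq_two]; exact hv
  have hsplit := contDiff_succ_iff_deriv.mp hv2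
  have hvdiff : Differentiable ℝ v := hsplit.1
  have hv1 : ContDiff ℝ 1 (deriv v) := hsplit.2.2
  have hcv : Continuous v := hv.continuous
  have hcv' : Continuous (deriv v) := hv1.continuous
  have hcv'' : Continuous (deriv (deriv v)) := hv1.continuous_deriv le_rfl
  have hvda : ∀ θ, HasDerivAt v (deriv v θ) θ := fun θ => (hvdiff θ).hasDerivAt
  have hv'da : ∀ θ, HasDerivAt (deriv v) (deriv (deriv v) θ) θ :=
    fun θ => (hv1.differentiable one_ne_zero θ).hasDerivAt
  have hv2π : v (2 * Real.pi) = v 0 := by simpa using hvper 0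
  have hv'2π : deriv v (2 * Real.pi) = deriv v 0 := by simpa using hv'per 0
  -- matrices
  set S : Matrix (Fin n) (Fin n) ℝ := Pm * D + Dᵀ * Pm with hS
  set M : Matrix (Fin n) (Fin n) ℝ := Pm * D with hM
  have hSsymm : S.IsSymm := by
    unfold Matrix.IsSymm
    rw [hS, Matrix.transpose_add, Matrix.transpose_mul, Matrix.transpose_mul,
      Matrix.transpose_transpose, hPm.eq, add_comm]
  have hSpos : S.PosSemidef := by
    refine Matrix.PosSemidef.of_dotProduct_mulVec_nonneg ?_ ?_
    · rw [Matrix.IsHermitian, Matrix.conjTranspose_eq_transpose_of_trivial, hSsymm.eq]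
    · intro x
      simpa using hPD x
  set T : Matrix (Fin n) (Fin n) ℝ := (open scoped MatrixOrder in CFC.sqrt S) with hT
  have hT2 : T * T = S := by open scoped MatrixOrder in exact CFC.sqrt_mul_sqrt_self S hSpos.nonneg
  have hTsymm : T.IsSymm := by
    have := (open scoped MatrixOrder in (CFC.sqrt_nonneg S).posSemidef.1 : T.IsHermitian)
    rw [Matrix.IsHermitian, Matrix.conjTranspose_eq_transpose_of_trivial] at this
    exact this
  have hSdot : ∀ a : Fin n → ℝ, a ⬝ᵥ (S *ᵥ a) = (T *ᵥ a) ⬝ᵥ (T *ᵥ a) := by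
    intro a
    rw [← hT2, ← Matrix.mulVec_mulVec, dot_symm T hTsymm]
  have hMdot : ∀ a : Fin n → ℝ, 2 * (a ⬝ᵥ (M *ᵥ a)) = a ⬝ᵥ (S *ᵥ a) := by
    intro a
    rw [hS, Matrix.add_mulVec, dotProduct_add]
    have : a ⬝ᵥ ((Dᵀ * Pm) *ᵥ a) = a ⬝ᵥ (M *ᵥ a) := by
      rw [← Matrix.mulVec_mulVec, dot_trans, dot_symm Pm hPm, hM, Matrix.mulVec_mulVec]
    rw [this]
    ring
  -- continuity of scalar integrands
  have cont_dot : ∀ (a b : ℝ → Fin n → ℝ), Continuous a → Continuous b →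
      Continuous (fun θ => a θ ⬝ᵥ b θ) := by
    intro a b ha hb
    simp only [dotProduct]
    exact continuous_finset_sum _ fun i _ =>
      ((continuous_apply i).comp ha).mul ((continuous_apply i).comp hb)
  have contMul : ∀ (k : ℕ) (N : Matrix (Fin k) (Fin n) ℝ) (a : ℝ → Fin n → ℝ),
      Continuous a → Continuous (fun θ => N *ᵥ a θ) := by
    intro k N a ha
    exact (LinearMap.toContinuousLinearMap (Matrix.mulVecLin N)).continuous.comp ha
  -- integration by parts : ∫ (v' ⬝ M v' + v ⬝ M v'') = 0
  have hGd : ∀ θ : ℝ, HasDerivAt (fun θ => v θ ⬝ᵥ (M *ᵥ deriv v θ))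
      (deriv v θ ⬝ᵥ (M *ᵥ deriv v θ) + v θ ⬝ᵥ (M *ᵥ deriv (deriv v) θ)) θ := by
    intro θ
    have hw2 : HasDerivAt (fun θ => M *ᵥ deriv v θ) (M *ᵥ deriv (deriv v) θ) θ :=
      (LinearMap.toContinuousLinearMap (Matrix.mulVecLin M)).hasFDerivAt.comp_hasDerivAt θ
        (hv'da θ)
    have h1 := hasDerivAt_pi.1 (hvda θ)
    have h2 := hasDerivAt_pi.1 hw2
    have hsum : HasDerivAt (fun θ => ∑ i : Fin n, v θ i * (M *ᵥ deriv v θ) i)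
        (∑ i : Fin n, (deriv v θ i * (M *ᵥ deriv v θ) i
          + v θ i * (M *ᵥ deriv (deriv v) θ) i)) θ :=
      HasDerivAt.fun_sum fun i _ => (h1 i).mul (h2 i)
    have : (∑ i : Fin n, (deriv v θ i * (M *ᵥ deriv v θ) i
          + v θ i * (M *ᵥ deriv (deriv v) θ) i))
        = deriv v θ ⬝ᵥ (M *ᵥ deriv v θ) + v θ ⬝ᵥ (M *ᵥ deriv (deriv v) θ) := by
      rw [Finset.sum_add_distrib]; rfl
    rw [this] at hsum
    exact hsum
  have hintq : IntervalIntegrable (fun θ => deriv v θ ⬝ᵥ (M *ᵥ deriv v θ))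
      MeasureTheory.volume 0 (2 * Real.pi) :=
    (cont_dot _ _ hcv' (contMul n M _ hcv')).intervalIntegrable _ _
  have hintg1 : IntervalIntegrable (fun θ => v θ ⬝ᵥ (M *ᵥ deriv (deriv v) θ))
      MeasureTheory.volume 0 (2 * Real.pi) :=
    (cont_dot _ _ hcv (contMul n M _ hcv'')).intervalIntegrable _ _
  have hparts : (∫ θ in (0:ℝ)..(2 * Real.pi),
      (deriv v θ ⬝ᵥ (M *ᵥ deriv v θ) + v θ ⬝ᵥ (M *ᵥ deriv (deriv v) θ))) = 0 := by
    rw [intervalIntegral.integral_eq_sub_of_hasDerivAt (fun θ _ => hGd θ)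
      ((hintq.add hintg1).congr ?_)]
    · rw [hv2π, hv'2π, sub_self]
    · exact fun _ _ => rfl
  have hIBP : (∫ θ in (0:ℝ)..(2 * Real.pi), v θ ⬝ᵥ (M *ᵥ deriv (deriv v) θ))
      = - ∫ θ in (0:ℝ)..(2 * Real.pi), deriv v θ ⬝ᵥ (M *ᵥ deriv v θ) := by
    rw [intervalIntegral.integral_add hintq hintg1] at hparts
    linarith
  -- Wirtinger, matrix-weighted
  have hfi : ∀ i : Fin n, (∫ θ in (0:ℝ)..(2 * Real.pi), ((T *ᵥ v θ) i) ^ 2)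
      ≤ ∫ θ in (0:ℝ)..(2 * Real.pi), ((T *ᵥ deriv v θ) i) ^ 2 := by
    intro i
    set Li : (Fin n → ℝ) →L[ℝ] ℝ :=
      (ContinuousLinearMap.proj i).comp (LinearMap.toContinuousLinearMap (Matrix.mulVecLin T))
      with hLi
    have hLiv : ∀ a : Fin n → ℝ, Li a = (T *ᵥ a) i := fun a => rfl
    refine wirtinger_aux (fun θ => (T *ᵥ v θ) i) (fun θ => (T *ᵥ deriv v θ) i)
      (fun θ => ?_) (Li.continuous.comp hcv')
      (fun θ => by show (T *ᵥ v (θ + 2*Real.pi)) i = (T *ᵥ v θ) i; rw [hvper θ])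
      (fun θ => by show (T *ᵥ deriv v (θ + 2*Real.pi)) i = (T *ᵥ deriv v θ) i; rw [hv'per θ]) ?_
    · have := Li.hasFDerivAt.comp_hasDerivAt θ (hvda θ)
      exact this
    · have h0 := Li.intervalIntegral_comp_comm
        (μ := MeasureTheory.volume) (hcv.intervalIntegrable 0 (2 * Real.pi))
      have : (∫ θ in (0:ℝ)..(2 * Real.pi), (T *ᵥ v θ) i)
          = Li (∫ θ in (0:ℝ)..(2 * Real.pi), v θ) := by
        rw [← h0]
        simp [hLiv]
      rw [this, hmean, map_zero]
  have hW : (∫ θ in (0:ℝ)..(2 * Real.pi), v θ ⬝ᵥ (S *ᵥ v θ))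
      ≤ ∫ θ in (0:ℝ)..(2 * Real.pi), deriv v θ ⬝ᵥ (S *ᵥ deriv v θ) := by
    have e1 : ∀ (w : ℝ → Fin n → ℝ) (θ : ℝ), w θ ⬝ᵥ (S *ᵥ w θ)
        = ∑ i : Fin n, ((T *ᵥ w θ) i) ^ 2 := by
      intro w θ
      rw [hSdot]
      simp [dotProduct, sq]
    have hint1 : ∀ (w : ℝ → Fin n → ℝ), Continuous w → ∀ i : Fin n,
        IntervalIntegrable (fun θ => ((T *ᵥ w θ) i) ^ 2) MeasureTheory.volume 0 (2 * Real.pi) :=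
      fun w hw i => (((continuous_apply i).comp (contMul n T _ hw)).pow 2).intervalIntegrable _ _
    calc (∫ θ in (0:ℝ)..(2 * Real.pi), v θ ⬝ᵥ (S *ᵥ v θ))
        = ∑ i : Fin n, ∫ θ in (0:ℝ)..(2 * Real.pi), ((T *ᵥ v θ) i) ^ 2 := by
          rw [← intervalIntegral.integral_finset_sum (fun i _ => hint1 v hcv i)]
          exact intervalIntegral.integral_congr fun θ _ => e1 v θ
      _ ≤ ∑ i : Fin n, ∫ θ in (0:ℝ)..(2 * Real.pi), ((T *ᵥ deriv v θ) i) ^ 2 :=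
          Finset.sum_le_sum fun i _ => hfi i
      _ = ∫ θ in (0:ℝ)..(2 * Real.pi), deriv v θ ⬝ᵥ (S *ᵥ deriv v θ) := by
          rw [← intervalIntegral.integral_finset_sum (fun i _ => hint1 _ hcv' i)]
          exact intervalIntegral.integral_congr fun θ _ => (e1 (deriv v) θ).symm
  -- pointwise LMI
  have hpt : ∀ θ : ℝ,
      2 * (v θ ⬝ᵥ (Pm *ᵥ (A *ᵥ v θ + B *ᵥ u θ))) + 2 * μ * (v θ ⬝ᵥ (Pm *ᵥ v θ))
          + ε * (v θ ⬝ᵥ v θ)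
        ≤ ((C *ᵥ v θ) ⬝ᵥ (Q *ᵥ (C *ᵥ v θ)) + 2 * ((C *ᵥ v θ) ⬝ᵥ (L *ᵥ u θ))
            + u θ ⬝ᵥ (R *ᵥ u θ)) + v θ ⬝ᵥ (S *ᵥ v θ) :=
    fun θ => lmi_pointwise A D Pm B C Q R L hPm μ ε (v θ) (u θ) (hLMI (Sum.elim (v θ) (u θ)))
  -- integrability of the pieces
  have hcontP2 : Continuous (fun θ => 2 * (v θ ⬝ᵥ (Pm *ᵥ (A *ᵥ v θ + B *ᵥ u θ)))
      + 2 * μ * (v θ ⬝ᵥ (Pm *ᵥ v θ)) + ε * (v θ ⬝ᵥ v θ)) := by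
    have c1 : Continuous (fun θ => A *ᵥ v θ + B *ᵥ u θ) :=
      ((LinearMap.toContinuousLinearMap (Matrix.mulVecLin A)).continuous.comp hcv).add
        ((LinearMap.toContinuousLinearMap (Matrix.mulVecLin B)).continuous.comp hu)
    exact ((continuous_const.mul (cont_dot _ _ hcv (contMul n Pm _ c1))).add
      (continuous_const.mul (cont_dot _ _ hcv (contMul n Pm _ hcv)))).add
      (continuous_const.mul (cont_dot _ _ hcv hcv))
  have hcontσ : Continuous (fun θ => (C *ᵥ v θ) ⬝ᵥ (Q *ᵥ (C *ᵥ v θ))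
      + 2 * ((C *ᵥ v θ) ⬝ᵥ (L *ᵥ u θ)) + u θ ⬝ᵥ (R *ᵥ u θ)) := by
    have cCv : Continuous (fun θ => C *ᵥ v θ) :=
      (LinearMap.toContinuousLinearMap (Matrix.mulVecLin C)).continuous.comp hcv
    have cQ : Continuous (fun θ => Q *ᵥ (C *ᵥ v θ)) :=
      (LinearMap.toContinuousLinearMap (Matrix.mulVecLin Q)).continuous.comp cCv
    have cL : Continuous (fun θ => L *ᵥ u θ) :=
      (LinearMap.toContinuousLinearMap (Matrix.mulVecLin L)).continuous.comp hu
    have cR : Continuous (fun θ => R *ᵥ u θ) :=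
      (LinearMap.toContinuousLinearMap (Matrix.mulVecLin R)).continuous.comp hu
    have d1 : Continuous (fun θ => (C *ᵥ v θ) ⬝ᵥ (Q *ᵥ (C *ᵥ v θ))) := by
      simp only [dotProduct]
      exact continuous_finset_sum _ fun i _ =>
        ((continuous_apply i).comp cCv).mul ((continuous_apply i).comp cQ)
    have d2 : Continuous (fun θ => (C *ᵥ v θ) ⬝ᵥ (L *ᵥ u θ)) := by
      simp only [dotProduct]
      exact continuous_finset_sum _ fun i _ =>
        ((continuous_apply i).comp cCv).mul ((continuous_apply i).comp cL)
    have d3 : Continuous (fun θ => u θ ⬝ᵥ (R *ᵥ u θ)) := by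
      simp only [dotProduct]
      exact continuous_finset_sum _ fun i _ =>
        ((continuous_apply i).comp hu).mul ((continuous_apply i).comp cR)
    exact (d1.add (continuous_const.mul d2)).add d3
  have hcontW : Continuous (fun θ => v θ ⬝ᵥ (S *ᵥ v θ)) :=
    cont_dot _ _ hcv (contMul n S _ hcv)
  have hintP2 := hcontP2.intervalIntegrable (μ := MeasureTheory.volume) (0:ℝ) (2 * Real.pi)
  have hintσ := hcontσ.intervalIntegrable (μ := MeasureTheory.volume) (0:ℝ) (2 * Real.pi)
  have hintW := hcontW.intervalIntegrable (μ := MeasureTheory.volume) (0:ℝ) (2 * Real.pi)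
  -- the integral of the LMI pointwise bound
  have hInt1 : (∫ θ in (0:ℝ)..(2 * Real.pi),
      (2 * (v θ ⬝ᵥ (Pm *ᵥ (A *ᵥ v θ + B *ᵥ u θ))) + 2 * μ * (v θ ⬝ᵥ (Pm *ᵥ v θ))
        + ε * (v θ ⬝ᵥ v θ)))
      ≤ (∫ θ in (0:ℝ)..(2 * Real.pi),
          ((C *ᵥ v θ) ⬝ᵥ (Q *ᵥ (C *ᵥ v θ)) + 2 * ((C *ᵥ v θ) ⬝ᵥ (L *ᵥ u θ))
            + u θ ⬝ᵥ (R *ᵥ u θ)))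
        + ∫ θ in (0:ℝ)..(2 * Real.pi), v θ ⬝ᵥ (S *ᵥ v θ) := by
    rw [← intervalIntegral.integral_add hintσ hintW]
    exact intervalIntegral.integral_mono_on (by positivity) hintP2 (hintσ.add hintW)
      (fun θ _ => hpt θ)
  -- split the LHS
  have hLHS : (∫ θ in (0:ℝ)..(2 * Real.pi),
      (2 * (v θ ⬝ᵥ (Pm *ᵥ (D *ᵥ deriv (deriv v) θ + A *ᵥ v θ + B *ᵥ u θ)))
        + 2 * μ * (v θ ⬝ᵥ (Pm *ᵥ v θ)) + ε * (v θ ⬝ᵥ v θ)))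
      = 2 * (∫ θ in (0:ℝ)..(2 * Real.pi), v θ ⬝ᵥ (M *ᵥ deriv (deriv v) θ))
        + ∫ θ in (0:ℝ)..(2 * Real.pi),
          (2 * (v θ ⬝ᵥ (Pm *ᵥ (A *ᵥ v θ + B *ᵥ u θ))) + 2 * μ * (v θ ⬝ᵥ (Pm *ᵥ v θ))
            + ε * (v θ ⬝ᵥ v θ)) := by
    rw [← intervalIntegral.integral_const_mul, ← intervalIntegral.integral_add
      (hintg1.const_mul 2) hintP2]
    apply intervalIntegral.integral_congr
    intro θ _
    show 2 * (v θ ⬝ᵥ (Pm *ᵥ (D *ᵥ deriv (deriv v) θ + A *ᵥ v θ + B *ᵥ u θ)))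
        + 2 * μ * (v θ ⬝ᵥ (Pm *ᵥ v θ)) + ε * (v θ ⬝ᵥ v θ)
      = 2 * (v θ ⬝ᵥ (M *ᵥ deriv (deriv v) θ))
        + (2 * (v θ ⬝ᵥ (Pm *ᵥ (A *ᵥ v θ + B *ᵥ u θ))) + 2 * μ * (v θ ⬝ᵥ (Pm *ᵥ v θ))
            + ε * (v θ ⬝ᵥ v θ))
    have : D *ᵥ deriv (deriv v) θ + A *ᵥ v θ + B *ᵥ u θ
        = D *ᵥ deriv (deriv v) θ + (A *ᵥ v θ + B *ᵥ u θ) := by abel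
    rw [this, Matrix.mulVec_add, dotProduct_add]
    rw [hM, ← Matrix.mulVec_mulVec]
    ring
  -- the W' identity
  have hq2 : (∫ θ in (0:ℝ)..(2 * Real.pi), deriv v θ ⬝ᵥ (S *ᵥ deriv v θ))
      = 2 * ∫ θ in (0:ℝ)..(2 * Real.pi), deriv v θ ⬝ᵥ (M *ᵥ deriv v θ) := by
    rw [← intervalIntegral.integral_const_mul]
    exact intervalIntegral.integral_congr fun θ _ => (hMdot (deriv v θ)).symm
  rw [hLHS, hIBP]
  linarith [hW, hInt1, hq2]
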